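/- For every n ≥ 2 and every h ≥ 0, the number of bargraphs of semiperimeter n whose least column height equals h equals the number of bargraphs of semiperimeter n whose leftmost horizontal segment has width h. -/

import Mathlib

/-- Steps of bargraphs / Motzkin paths. -/
inductive Step where
  | U : Step
  | H : Step
  | D : Step
deriving DecidableEq

/-- Vertical displacement of a step. -/
def Step.val : Step → ℤ
  | .U => 1
  | .H => 0
  | .D => -1

/-- Mirror of a step (swap U and D). -/
def Step.mirror : Step → Step
  | .U => .D
  | .H => .H
  | .D => .U

/-- Final height of a word. -/
def hgt (w : List Step) : ℤ := (w.map Step.val).sum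

/-- A Motzkin path prefix: never goes below the x-axis. -/
def IsMotzkinPrefix (w : List Step) : Prop := ∀ p : List Step, p <+: w → 0 ≤ hgt p

/-- A Motzkin path: never below the x-axis, ends at height 0. -/
def IsMotzkin (w : List Step) : Prop := IsMotzkinPrefix w ∧ hgt w = 0

/-- No peak `UD` and no valley `DU`. -/
def Cornerless (w : List Step) : Prop :=
  ¬ [Step.U, Step.D] <:+: w ∧ ¬ [Step.D, Step.U] <:+: w

/-- A bargraph: starts at the origin, ends on the x-axis, stays strictly above the
x-axis except at the endpoints, and has no factor `UD` or `DU`. -/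
def IsBargraph (w : List Step) : Prop :=
  2 ≤ w.length ∧ hgt w = 0 ∧
    (∀ p : List Step, p <+: w → p ≠ [] → p ≠ w → 0 < hgt p) ∧ Cornerless w

/-- Semiperimeter: number of `U` steps plus number of `H` steps. -/
def semi (w : List Step) : ℕ := w.count Step.U + w.count Step.H

/-- Length of the initial run of `U` steps. -/
def leadU : List Step → ℕ
  | Step.U :: rest => leadU rest + 1
  | _ => 0

/-- Length of the initial run of `H` steps. -/
def leadH : List Step → ℕ
  | Step.H :: rest => leadH rest + 1
  | _ => 0

/-- Length of the initial run of `D` steps. -/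
def leadD : List Step → ℕ
  | Step.D :: rest => leadD rest + 1
  | _ => 0

/-- Length of the first maximal run of `D` steps (0 if none). -/
def firstDescLen : List Step → ℕ
  | [] => 0
  | Step.D :: rest => leadD rest + 1
  | _ :: rest => firstDescLen rest

/-- Number of occurrences of the two-letter factor `a b`. -/
def cnt2 (a b : Step) : List Step → ℕ
  | x :: y :: rest => (if x = a ∧ y = b then 1 else 0) + cnt2 a b (y :: rest)
  | _ => 0

/-- Heights of the columns (`H` steps), starting from a given height. -/
def colHeights : ℤ → List Step → List ℤ
  | _, [] => []
  | h, Step.U :: rest => colHeights (h + 1) rest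
  | h, Step.H :: rest => h :: colHeights h rest
  | h, Step.D :: rest => colHeights (h - 1) rest

/-- Width of the leftmost maximal horizontal segment (0 if none). -/
def lhsW : List Step → ℕ
  | [] => 0
  | Step.H :: rest => leadH rest + 1
  | _ :: rest => lhsW rest

/-- Delete `h` steps at the start of the leftmost horizontal segment. -/
def stripLeadH (h : ℕ) : List Step → List Step
  | [] => []
  | Step.H :: rest => List.drop h (Step.H :: rest)
  | s :: rest => s :: stripLeadH h rest

/-- Number of initial columns of height 1: largest `j` such that the word begins `U H^j`. -/
def iuc : List Step → ℕ
  | Step.U :: rest => leadH rest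
  | _ => 0

/-- Number of maximal horizontal segments. -/
def hsCount : List Step → ℕ
  | [] => 0
  | [Step.H] => 1
  | [_] => 0
  | a :: b :: rest => (if a = Step.H ∧ b ≠ Step.H then 1 else 0) + hsCount (b :: rest)

/-- Mirror image: reverse the word and swap `U` with `D`. -/
def mir (w : List Step) : List Step := (w.reverse).map Step.mirror

/-- Shape of strictly alternating bargraphs:
`U^{i₁} H D^{k₁} H U^{i₂} H D^{k₂} H ⋯ U^{iₘ} H D^{kₘ}` with all `iᵣ, kᵣ ≥ 1`. -/
inductive SAShape : List Step → Prop where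
  | base (i k : ℕ) : 1 ≤ i → 1 ≤ k →
      SAShape (List.replicate i Step.U ++ [Step.H] ++ List.replicate k Step.D)
  | cons (i k : ℕ) (w : List Step) : 1 ≤ i → 1 ≤ k → SAShape w →
      SAShape (List.replicate i Step.U ++ [Step.H] ++ List.replicate k Step.D ++ [Step.H] ++ w)

/-- A strictly alternating bargraph. -/
def IsStrictAlt (w : List Step) : Prop := IsBargraph w ∧ SAShape w

/-- A secondary structure on `{0, …, m-1}`: all consecutive edges are present, every
vertex has at most one non-consecutive neighbour, and there are no crossing edges. -/
def IsSecondaryStructure {m : ℕ} (G : SimpleGraph (Fin m)) : Prop :=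
  (∀ i j : Fin m, (i : ℕ) + 1 = (j : ℕ) → G.Adj i j) ∧
  (∀ i j k : Fin m, G.Adj i j → G.Adj i k →
      (i : ℕ) + 1 ≠ (j : ℕ) → (j : ℕ) + 1 ≠ (i : ℕ) →
      (i : ℕ) + 1 ≠ (k : ℕ) → (k : ℕ) + 1 ≠ (i : ℕ) → j = k) ∧
  ¬ ∃ i j k l : Fin m, (i : ℕ) < (j : ℕ) ∧ (j : ℕ) < (k : ℕ) ∧ (k : ℕ) < (l : ℕ) ∧
      G.Adj i k ∧ G.Adj j l

/-- Generating function of bargraphs: `x` (variable 0) marks `H` steps,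
`y` (variable 1) marks `U` steps. -/
noncomputable def BG : MvPowerSeries (Fin 2) ℚ :=
  fun d => (Nat.card {w : List Step //
    IsBargraph w ∧ w.count Step.H = d 0 ∧ w.count Step.U = d 1} : ℚ)

/-- Generating function of cornerless Motzkin paths. -/
noncomputable def MG : MvPowerSeries (Fin 2) ℚ :=
  fun d => (Nat.card {w : List Step //
    IsMotzkin w ∧ Cornerless w ∧ w.count Step.H = d 0 ∧ w.count Step.U = d 1} : ℚ)

/-- Generating function of bargraphs avoiding the factor `DH`. -/
noncomputable def BDH : MvPowerSeries (Fin 2) ℚ :=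
  fun d => (Nat.card {w : List Step //
    IsBargraph w ∧ ¬ [Step.D, Step.H] <:+: w ∧
      w.count Step.H = d 0 ∧ w.count Step.U = d 1} : ℚ)

/-- Generating function of bargraphs avoiding the factors `DH` and `HH`. -/
noncomputable def BDHHH : MvPowerSeries (Fin 2) ℚ :=
  fun d => (Nat.card {w : List Step //
    IsBargraph w ∧ ¬ [Step.D, Step.H] <:+: w ∧ ¬ [Step.H, Step.H] <:+: w ∧
      w.count Step.H = d 0 ∧ w.count Step.U = d 1} : ℚ)

/-- Generating function of cornerless Motzkin path prefixes ending at height `h`. -/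
noncomputable def Pgf (h : ℕ) : MvPowerSeries (Fin 2) ℚ :=
  fun d => (Nat.card {w : List Step //
    IsMotzkinPrefix w ∧ Cornerless w ∧ hgt w = (h : ℤ) ∧
      w.count Step.H = d 0 ∧ w.count Step.U = d 1} : ℚ)

/-- Decomposition `G = U^a G₁ H G₂ D^a` of a strictly alternating bargraph. -/
def SADecomp (t : ℕ × List Step × List Step) (G : List Step) : Prop :=
  1 ≤ t.1 ∧ IsStrictAlt t.2.1 ∧ IsStrictAlt (Step.U :: (t.2.2 ++ [Step.D])) ∧
    G = List.replicate t.1 Step.U ++ t.2.1 ++ [Step.H] ++ t.2.2 ++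
      List.replicate t.1 Step.D

namespace LchLhs
open Step List

/-- Connector from height `p` to height `c`. -/
def up (p c : ℕ) : List Step :=
  if p ≤ c then List.replicate (c - p) Step.U else List.replicate (p - c) Step.D

/-- Encode a list of column heights (continuing from height `p`) as a word. -/
def enc : ℕ → List ℕ → List Step
  | p, [] => List.replicate p Step.D
  | p, c :: cs => up p c ++ Step.H :: enc c cs

/-- Semiperimeter weight of a height list, with previous height `p`. -/
def wgt : ℕ → List ℕ → ℕ
  | _, [] => 0
  | p, c :: cs => (c - p) + 1 + wgt c cs

def leadEq (c : ℕ) : List ℕ → ℕ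
  | [] => 0
  | d :: t => if d = c then leadEq c t + 1 else 0

/-- Length of the initial run of equal entries. -/
def run : List ℕ → ℕ
  | [] => 0
  | c :: t => leadEq c t + 1

def okcs (cs : List ℕ) : Prop := cs ≠ [] ∧ ∀ c ∈ cs, 1 ≤ c

/- basic hgt lemmas -/
lemma hgt_nil : hgt [] = 0 := rfl
lemma hgt_cons (a : Step) (w : List Step) : hgt (a :: w) = a.val + hgt w := by
  simp [hgt]
lemma hgt_append (v w : List Step) : hgt (v ++ w) = hgt v + hgt w := by
  simp [hgt]
lemma hgt_repU (k : ℕ) : hgt (List.replicate k Step.U) = k := by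
  simp [hgt, List.map_replicate, Step.val]
lemma hgt_repD (k : ℕ) : hgt (List.replicate k Step.D) = -k := by
  simp [hgt, List.map_replicate, Step.val]

lemma hgt_up (p c : ℕ) : hgt (up p c) = (c : ℤ) - p := by
  unfold up
  split
  · rw [hgt_repU]; omega
  · rw [hgt_repD]; omega

lemma hgt_enc (p : ℕ) (cs : List ℕ) : hgt (enc p cs) = -(p : ℤ) := by
  induction cs generalizing p with
  | nil => simp [enc, hgt_repD]
  | cons c cs ih => simp [enc, hgt_append, hgt_up, hgt_cons, ih, Step.val]; ring

end LchLhs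
namespace LchLhs
open Step List

lemma count_up_U (p c : ℕ) : (up p c).count Step.U = c - p := by
  unfold up; split
  · simp
  · simp [List.count_replicate]; omega

lemma count_up_H (p c : ℕ) : (up p c).count Step.H = 0 := by
  unfold up; split <;> simp [List.count_replicate]

lemma count_repD_U (k : ℕ) : (List.replicate k Step.D).count Step.U = 0 := by
  simp [List.count_replicate]
lemma count_repD_H (k : ℕ) : (List.replicate k Step.D).count Step.H = 0 := by
  simp [List.count_replicate]

lemma semi_enc (p : ℕ) (cs : List ℕ) : semi (enc p cs) = wgt p cs := by
  induction cs generalizing p with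
  | nil => simp [enc, semi, count_repD_U, count_repD_H, wgt]
  | cons c cs ih =>
      have h1 := ih c
      simp only [semi] at h1 ⊢
      simp only [enc, wgt, List.count_append, List.count_cons,
        count_up_U, count_up_H]
      simp
      omega

lemma colHeights_repU (k : ℕ) (h : ℤ) (v : List Step) :
    colHeights h (List.replicate k Step.U ++ v) = colHeights (h + k) v := by
  induction k generalizing h with
  | zero => simp
  | succ k ih =>
      rw [List.replicate_succ, List.cons_append]
      show colHeights (h + 1) _ = _
      rw [ih]; congr 1; push_cast; ring

lemma colHeights_repD (k : ℕ) (h : ℤ) (v : List Step) :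
    colHeights h (List.replicate k Step.D ++ v) = colHeights (h - k) v := by
  induction k generalizing h with
  | zero => simp
  | succ k ih =>
      rw [List.replicate_succ, List.cons_append]
      show colHeights (h - 1) _ = _
      rw [ih]; congr 1; push_cast; ring

lemma colHeights_up (p c : ℕ) (v : List Step) :
    colHeights (p : ℤ) (up p c ++ v) = colHeights (c : ℤ) v := by
  unfold up; split
  · rw [colHeights_repU]; congr 1; omega
  · rw [colHeights_repD]; congr 1; omega

lemma colHeights_enc (p : ℕ) (cs : List ℕ) :
    colHeights (p : ℤ) (enc p cs) = cs.map (fun c : ℕ => (c : ℤ)) := by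
  induction cs generalizing p with
  | nil =>
      show colHeights (p:ℤ) (List.replicate p Step.D) = []
      have := colHeights_repD p (p : ℤ) []
      simpa [colHeights] using this
  | cons c cs ih =>
      show colHeights (p:ℤ) (up p c ++ Step.H :: enc c cs) = _
      rw [colHeights_up]
      show ((c:ℤ)) :: colHeights (c:ℤ) (enc c cs) = _
      rw [ih]; rfl

lemma lhsW_repU (k : ℕ) (v : List Step) :
    lhsW (List.replicate k Step.U ++ v) = lhsW v := by
  induction k with
  | zero => simp
  | succ k ih => rw [List.replicate_succ, List.cons_append]; exact ih

lemma leadH_enc (p : ℕ) (cs : List ℕ) (hp : 1 ≤ p) (hcs : ∀ c ∈ cs, 1 ≤ c) :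
    leadH (enc p cs) = leadEq p cs := by
  induction cs generalizing p with
  | nil =>
      obtain ⟨q, rfl⟩ := Nat.exists_eq_add_of_le hp
      show leadH (List.replicate (1+q) Step.D) = 0
      rw [Nat.add_comm, List.replicate_succ]; rfl
  | cons c cs ih =>
      show leadH (up p c ++ Step.H :: enc c cs) = leadEq p (c :: cs)
      rcases eq_or_ne c p with rfl | hne
      · have : up c c = [] := by simp [up]
        rw [this, List.nil_append]
        show leadH (enc c cs) + 1 = _
        rw [ih c hp (fun x hx => hcs x (List.mem_cons_of_mem _ hx))]
        simp [leadEq]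
      · have h1 : leadEq p (c :: cs) = 0 := by simp [leadEq, hne]
        rw [h1]
        unfold up
        split
        · have : c - p ≠ 0 := by omega
          obtain ⟨m, hm⟩ : ∃ m, c - p = m + 1 := ⟨c - p - 1, by omega⟩
          rw [hm, List.replicate_succ, List.cons_append]; rfl
        · have : p - c ≠ 0 := by omega
          obtain ⟨m, hm⟩ : ∃ m, p - c = m + 1 := ⟨p - c - 1, by omega⟩
          rw [hm, List.replicate_succ, List.cons_append]; rfl

lemma lhsW_enc (cs : List ℕ) (hcs : ∀ c ∈ cs, 1 ≤ c) :
    lhsW (enc 0 cs) = run cs := by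
  cases cs with
  | nil => rfl
  | cons c t =>
      show lhsW (up 0 c ++ Step.H :: enc c t) = leadEq c t + 1
      have : up 0 c = List.replicate c Step.U := by simp [up]
      rw [this, lhsW_repU]
      show leadH (enc c t) + 1 = _
      rw [leadH_enc c t (hcs c (List.mem_cons_self)) (fun x hx => hcs x (List.mem_cons_of_mem _ hx))]

end LchLhs
namespace LchLhs
open Step List

def R (a b : Step) : Prop := ¬(a = Step.U ∧ b = Step.D) ∧ ¬(a = Step.D ∧ b = Step.U)

lemma R_same (a : Step) : R a a := by cases a <;> simp [R]
lemma R_H_left (b : Step) : R Step.H b := by cases b <;> simp [R]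
lemma R_H_right (a : Step) : R a Step.H := by cases a <;> simp [R]

lemma chainR_replicate (k : ℕ) (a : Step) : List.Chain' R (List.replicate k a) := by
  induction k with
  | zero => exact List.isChain_nil
  | succ k ih =>
      rw [List.replicate_succ]
      exact List.isChain_cons.2 ⟨fun y hy => by
        cases k with
        | zero => simp at hy
        | succ m =>
            rw [List.replicate_succ] at hy
            simp at hy; subst hy; exact R_same a, ih⟩

lemma chainR_up (p c : ℕ) : List.Chain' R (up p c) := by
  unfold up; split <;> apply chainR_replicate

lemma chainR_enc (p : ℕ) (cs : List ℕ) : List.Chain' R (enc p cs) := by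
  induction cs generalizing p with
  | nil => exact chainR_replicate p Step.D
  | cons c cs ih =>
      show List.Chain' R (up p c ++ Step.H :: enc c cs)
      rw [List.Chain', List.isChain_append]
      refine ⟨chainR_up p c, ?_, ?_⟩
      · exact List.isChain_cons.2 ⟨fun y _ => R_H_left y, ih c⟩
      · intro x _ y hy
        simp at hy; subst hy; exact R_H_right x

lemma cornerless_of_chain {w : List Step} (hc : List.Chain' R w) : Cornerless w := by
  constructor
  · intro hinf
    have := hc.infix hinf
    rw [List.isChain_cons_cons] at this
    exact this.1.1 ⟨rfl, rfl⟩
  · intro hinf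
    have := hc.infix hinf
    rw [List.isChain_cons_cons] at this
    exact this.1.2 ⟨rfl, rfl⟩

lemma cornerless_enc (p : ℕ) (cs : List ℕ) : Cornerless (enc p cs) :=
  cornerless_of_chain (chainR_enc p cs)

lemma prefix_append_cases {α : Type*} {q a b : List α} (h : q <+: a ++ b) :
    q <+: a ∨ ∃ r, r <+: b ∧ q = a ++ r := by
  obtain ⟨t, ht⟩ := h
  rcases List.append_eq_append_iff.1 ht with ⟨a', ha, _⟩ | ⟨c', hq, hb⟩
  · exact Or.inl ⟨a', ha.symm⟩
  · exact Or.inr ⟨c', ⟨t, hb.symm⟩, hq⟩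

lemma prefix_replicate {α : Type*} {q : List α} {k : ℕ} {a : α} (h : q <+: List.replicate k a) :
    ∃ n ≤ k, q = List.replicate n a := by
  exact List.sublist_replicate_iff.1 h.sublist

lemma pos_prefix_enc (cs : List ℕ) (hcs : ∀ c ∈ cs, 1 ≤ c) :
    ∀ (p : ℕ) (q : List Step), q <+: enc p cs → q ≠ enc p cs →
      (q ≠ [] ∨ 1 ≤ p) → 0 < (p : ℤ) + hgt q := by
  induction cs with
  | nil =>
      intro p q hq hne _
      obtain ⟨n, hn, rfl⟩ := prefix_replicate hq
      have : n ≠ p := fun h => hne (by rw [h]; rfl)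
      rw [hgt_repD]; omega
  | cons c cs ih =>
      intro p q hq hne hside
      have hc : 1 ≤ c := hcs c (List.mem_cons_self)
      rcases prefix_append_cases hq with hq1 | ⟨r, hr, rfl⟩
      · unfold up at hq1
        split at hq1
        · obtain ⟨n, _, rfl⟩ := prefix_replicate hq1
          rw [hgt_repU]
          rcases hside with hne' | hp
          · have : n ≠ 0 := by
              intro h; subst h; exact hne' rfl
            omega
          · omega
        · obtain ⟨n, hn, rfl⟩ := prefix_replicate hq1
          rw [hgt_repD]; omega
      · cases r with
        | nil =>
            rw [List.append_nil, hgt_up]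
            omega
        | cons x r' =>
            have hx : x = Step.H ∧ r' <+: enc c cs := by
              obtain ⟨t, ht⟩ := hr
              rw [List.cons_append] at ht
              injection ht with h1 h2
              exact ⟨h1, ⟨t, h2⟩⟩
            obtain ⟨rfl, hr'⟩ := hx
            have hner : r' ≠ enc c cs := by
              intro h; subst h; exact hne rfl
            have := ih (fun x hx => hcs x (List.mem_cons_of_mem _ hx)) c r' hr' hner (Or.inr hc)
            rw [hgt_append, hgt_up, hgt_cons]
            show 0 < (p:ℤ) + ((c:ℤ) - p + (0 + hgt r'))
            omega

lemma length_enc_pos (p : ℕ) (cs : List ℕ) (h : cs ≠ []) (hcs : ∀ c ∈ cs, 1 ≤ c) :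
    2 ≤ (enc p cs).length := by
  cases cs with
  | nil => exact absurd rfl h
  | cons c t =>
      show 2 ≤ (up p c ++ Step.H :: enc c t).length
      rw [List.length_append]
      cases t with
      | nil =>
          have hc : 1 ≤ c := hcs c (List.mem_cons_self)
          show 2 ≤ (up p c).length + (List.replicate c Step.D).length + 1
          simp; omega
      | cons d t' =>
          show 2 ≤ (up p c).length + (up c d ++ Step.H :: enc d t').length + 1
          rw [List.length_append]
          simp; omega

lemma isBargraph_enc (cs : List ℕ) (h : okcs cs) : IsBargraph (enc 0 cs) := by
  obtain ⟨hne, hcs⟩ := h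
  refine ⟨length_enc_pos 0 cs hne hcs, by simpa using hgt_enc 0 cs, ?_, cornerless_enc 0 cs⟩
  intro q hq hqne hqw
  have := pos_prefix_enc cs hcs 0 q hq hqw (Or.inl hqne)
  simpa using this
end LchLhs
namespace LchLhs
open Step List

lemma up_succ_U (p c : ℕ) (h : p < c) : up p c = Step.U :: up (p+1) c := by
  unfold up
  rw [if_pos (by omega), if_pos (by omega),
    show c - p = (c - (p+1)) + 1 from by omega, List.replicate_succ]

lemma up_succ_D (p c : ℕ) (h : c < p) : up p c = Step.D :: up (p-1) c := by
  unfold up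
  rw [if_neg (by omega)]
  rcases Nat.lt_or_ge c (p-1) with h1 | h1
  · rw [if_neg (by omega),
      show p - c = (p - 1 - c) + 1 from by omega, List.replicate_succ]
  · have hc : c = p - 1 := by omega
    subst hc
    rw [if_pos (le_refl _)]
    have : p - (p-1) = 1 := by omega
    rw [this]
    simp

lemma dec_aux : ∀ (w : List Step) (p : ℕ), 1 ≤ p → (p : ℤ) + hgt w = 0 →
    (∀ q, q <+: w → q ≠ w → 0 < (p : ℤ) + hgt q) → Cornerless w →
    ∃ cs, (∀ c ∈ cs, 1 ≤ c) ∧ w = enc p cs := by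
  intro w
  induction w with
  | nil =>
      intro p hp hend _ _
      simp [hgt_nil] at hend
      omega
  | cons x t ih =>
      intro p hp hend hpre hcorn
      have hcorn_t : Cornerless t :=
        ⟨fun h => hcorn.1 (h.trans (List.infix_cons_iff.2 (Or.inr (List.infix_refl t)) )),
         fun h => hcorn.2 (h.trans (List.infix_cons_iff.2 (Or.inr (List.infix_refl t))))⟩
      cases x with
      | H =>
          -- w = H :: t
          have ht_ne : t ≠ [] := by
            intro h; subst h
            rw [hgt_cons] at hend
            simp [Step.val, hgt_nil] at hend
            omega
          obtain ⟨cs, hcs, rfl⟩ := ih p hp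
            (by rw [hgt_cons] at hend; simpa [Step.val] using hend)
            (by
              intro q hq hqne
              have h1 : (Step.H :: q) <+: (Step.H :: t) := List.cons_prefix_cons.2 ⟨rfl, hq⟩
              have h2 : (Step.H :: q) ≠ (Step.H :: t) := by
                intro h; injection h with _ h'; exact hqne h'
              have := hpre _ h1 h2
              rwa [hgt_cons, show (Step.H).val = 0 from rfl, zero_add] at this)
            hcorn_t
          refine ⟨p :: cs, fun c hc => by rcases List.mem_cons.1 hc with rfl | h; exact hp; exact hcs c h, ?_⟩
          show Step.H :: enc p cs = up p p ++ Step.H :: enc p cs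
          simp [up]
      | U =>
          have ht_ne : t ≠ [] := by
            intro h; subst h
            rw [hgt_cons] at hend
            simp [Step.val, hgt_nil] at hend
            omega
          obtain ⟨cs, hcs, ht⟩ := ih (p+1) (by omega)
            (by rw [hgt_cons] at hend; simp [Step.val] at hend; push_cast; linarith)
            (by
              intro q hq hqne
              have h1 : (Step.U :: q) <+: (Step.U :: t) := List.cons_prefix_cons.2 ⟨rfl, hq⟩
              have h2 : (Step.U :: q) ≠ (Step.U :: t) := by
                intro h; injection h with _ h'; exact hqne h'
              have := hpre _ h1 h2
              rw [hgt_cons, show (Step.U).val = 1 from rfl] at this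
              push_cast
              omega)
            hcorn_t
          cases cs with
          | nil =>
              exfalso
              rw [ht] at hcorn
              show False
              apply hcorn.1
              show [Step.U, Step.D] <:+: Step.U :: enc (p+1) []
              refine ⟨[], List.replicate p Step.D, ?_⟩
              show ([Step.U, Step.D] ++ List.replicate p Step.D) = Step.U :: enc (p+1) []
              show Step.U :: Step.D :: List.replicate p Step.D = Step.U :: List.replicate (p+1) Step.D
              rw [List.replicate_succ]
          | cons c rest =>
              have hc1 : p + 1 ≤ c := by
                by_contra hlt
                push_neg at hlt
                -- c < p+1, so c ≤ p, up (p+1) c starts with D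
                have : up (p+1) c = Step.D :: up p c := up_succ_D (p+1) c (by omega)
                apply hcorn.1
                rw [ht]
                show [Step.U, Step.D] <:+: Step.U :: (up (p+1) c ++ Step.H :: enc c rest)
                rw [this]
                exact ⟨[], up p c ++ Step.H :: enc c rest, rfl⟩
              refine ⟨c :: rest, hcs, ?_⟩
              show Step.U :: t = up p c ++ Step.H :: enc c rest
              rw [ht, up_succ_U p c (by omega)]
              rfl
      | D =>
          cases t with
          | nil =>
              have hp1 : p = 1 := by
                rw [hgt_cons] at hend
                simp [Step.val, hgt_nil] at hend
                omega
              subst hp1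
              exact ⟨[], by simp, rfl⟩
          | cons y t' =>
              have hp2 : 2 ≤ p := by
                have := hpre [Step.D] ⟨y :: t', rfl⟩ (by simp)
                rw [hgt_cons] at this
                simp [Step.val, hgt_nil] at this
                omega
              obtain ⟨cs, hcs, ht⟩ := ih (p-1) (by omega)
                (by
                  rw [hgt_cons] at hend
                  have : ((p - 1 : ℕ) : ℤ) = (p : ℤ) - 1 := by
                    push_cast [Nat.cast_sub (by omega : 1 ≤ p)]; ring
                  rw [this]
                  simp [Step.val] at hend ⊢
                  omega)
                (by
                  intro q hq hqne
                  have h1 : (Step.D :: q) <+: (Step.D :: y :: t') := List.cons_prefix_cons.2 ⟨rfl, hq⟩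
                  have h2 : (Step.D :: q) ≠ (Step.D :: y :: t') := by
                    intro h; injection h with _ h'; exact hqne h'
                  have := hpre _ h1 h2
                  rw [hgt_cons, show (Step.D).val = -1 from rfl] at this
                  have hcast : ((p - 1 : ℕ) : ℤ) = (p : ℤ) - 1 := by
                    push_cast [Nat.cast_sub (by omega : 1 ≤ p)]; ring
                  rw [hcast]
                  omega)
                hcorn_t
              cases cs with
              | nil =>
                  refine ⟨[], by simp, ?_⟩
                  show Step.D :: (y :: t') = List.replicate p Step.D
                  rw [ht]
                  show Step.D :: enc (p-1) [] = List.replicate p Step.D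
                  show Step.D :: List.replicate (p-1) Step.D = List.replicate p Step.D
                  rw [← List.replicate_succ]
                  congr 1
                  omega
              | cons c rest =>
                  have hc1 : c ≤ p - 1 := by
                    by_contra hlt
                    push_neg at hlt
                    have hpp : p - 1 + 1 = p := by omega
                    have hthis : up (p-1) c = Step.U :: up p c := by
                      have h5 := up_succ_U (p-1) c (by omega)
                      rw [hpp] at h5
                      exact h5
                    apply hcorn.2
                    rw [ht]
                    show [Step.D, Step.U] <:+: Step.D :: (up (p-1) c ++ Step.H :: enc c rest)
                    rw [hthis]
                    exact ⟨[], up p c ++ Step.H :: enc c rest, rfl⟩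
                  refine ⟨c :: rest, hcs, ?_⟩
                  show Step.D :: (y :: t') = up p c ++ Step.H :: enc c rest
                  rw [ht, up_succ_D p c (by omega)]
                  rfl

lemma dec0 (w : List Step) (hw : IsBargraph w) : ∃ cs, okcs cs ∧ w = enc 0 cs := by
  obtain ⟨hlen, hend, hpre, hcorn⟩ := hw
  cases w with
  | nil => simp at hlen
  | cons x t =>
      have ht_ne : t ≠ [] := by
        intro h; subst h; simp at hlen
      have hxU : x = Step.U := by
        have := hpre [x] ⟨t, rfl⟩ (by simp) (by
          intro h
          injection h with h1 h2
          exact ht_ne h2.symm)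
        rw [hgt_cons, hgt_nil] at this
        cases x <;> simp [Step.val] at this ⊢
      subst hxU
      have hcorn_t : Cornerless t :=
        ⟨fun h => hcorn.1 (h.trans (List.infix_cons_iff.2 (Or.inr (List.infix_refl t)))),
         fun h => hcorn.2 (h.trans (List.infix_cons_iff.2 (Or.inr (List.infix_refl t))))⟩
      obtain ⟨cs, hcs, ht⟩ := dec_aux t 1 le_rfl
        (by rw [hgt_cons] at hend; simp [Step.val] at hend ⊢; omega)
        (by
          intro q hq hqne
          rcases eq_or_ne q [] with rfl | hqne2
          · simp [hgt_nil]
          · have h1 : (Step.U :: q) <+: (Step.U :: t) := List.cons_prefix_cons.2 ⟨rfl, hq⟩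
            have h2 : (Step.U :: q) ≠ (Step.U :: t) := by
              intro h; injection h with _ h'; exact hqne h'
            have := hpre _ h1 (by simp) h2
            rw [hgt_cons, show (Step.U).val = 1 from rfl] at this
            push_cast
            omega)
        hcorn_t
      cases cs with
      | nil =>
          exfalso
          apply hcorn.1
          rw [ht]
          show [Step.U, Step.D] <:+: Step.U :: List.replicate 1 Step.D
          exact ⟨[], [], by rfl⟩
      | cons c rest =>
          have hc1 : 1 ≤ c := hcs c (List.mem_cons_self)
          refine ⟨c :: rest, ⟨by simp, hcs⟩, ?_⟩
          show Step.U :: t = up 0 c ++ Step.H :: enc c rest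
          rw [ht, up_succ_U 0 c (by omega)]
          rfl

lemma enc0_inj : ∀ {cs cs' : List ℕ}, enc 0 cs = enc 0 cs' → cs = cs' := by
  intro cs cs' h
  have h1 := colHeights_enc 0 cs
  have h2 := colHeights_enc 0 cs'
  rw [h] at h1
  have h3 : cs.map (fun c : ℕ => (c : ℤ)) = cs'.map (fun c : ℕ => (c : ℤ)) := h1.symm.trans h2
  have hinj : Function.Injective (fun c : ℕ => (c : ℤ)) := Nat.cast_injective
  exact (List.map_injective_iff.2 hinj) h3
end LchLhs
namespace LchLhs
open List

lemma one_le_wgt {cs : List ℕ} (h : cs ≠ []) (p : ℕ) : 1 ≤ wgt p cs := by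
  cases cs with
  | nil => exact absurd rfl h
  | cons c t => show 1 ≤ (c - p) + 1 + wgt c t; omega

lemma length_le_wgt (cs : List ℕ) (p : ℕ) : cs.length ≤ wgt p cs := by
  induction cs generalizing p with
  | nil => simp [wgt]
  | cons c t ih =>
      have := ih c
      show t.length + 1 ≤ (c - p) + 1 + wgt c t
      omega

lemma mem_le_wgt (cs : List ℕ) (p : ℕ) : ∀ c ∈ cs, c ≤ p + wgt p cs := by
  induction cs generalizing p with
  | nil => simp
  | cons c t ih =>
      intro x hx
      rcases List.mem_cons.1 hx with rfl | hx'
      · show x ≤ p + ((x - p) + 1 + wgt x t); omega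
      · have h1 := ih c x hx'
        show x ≤ p + ((c - p) + 1 + wgt c t)
        omega

lemma finite_S (n : ℕ) : {cs : List ℕ | wgt 0 cs = n}.Finite := by
  have hfin := (List.finite_length_le (Fin (n+1)) n).image (List.map Fin.val)
  apply hfin.subset
  intro cs hcs
  simp only [Set.mem_setOf_eq] at hcs
  have hlen : cs.length ≤ n := hcs ▸ length_le_wgt cs 0
  have hmem : ∀ c ∈ cs, c < n + 1 := by
    intro c hc
    have := mem_le_wgt cs 0 c hc
    omega
  refine ⟨cs.map (fun c => (⟨c % (n+1), Nat.mod_lt _ (Nat.succ_pos n)⟩ : Fin (n+1))), ?_, ?_⟩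
  · simp only [Set.mem_setOf_eq, List.length_map]
    exact hlen
  · rw [List.map_map]
    conv_rhs => rw [← List.map_id cs]
    apply List.map_congr_left
    intro c hc
    simp [Nat.mod_eq_of_lt (hmem c hc)]

instance finite_sub (P : List ℕ → Prop) (n : ℕ) :
    Finite {cs : List ℕ // okcs cs ∧ wgt 0 cs = n ∧ P cs} := by
  have h : {cs : List ℕ | okcs cs ∧ wgt 0 cs = n ∧ P cs}.Finite :=
    (finite_S n).subset (fun cs hcs => hcs.2.1)
  exact h.to_subtype

/- weight under shifting all heights -/
lemma wgt_map_succ_aux (cs : List ℕ) (p : ℕ) :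
    wgt (p+1) (cs.map (· + 1)) = wgt p cs := by
  induction cs generalizing p with
  | nil => simp [wgt]
  | cons c t ih =>
      show (c + 1 - (p+1)) + 1 + wgt (c+1) (t.map (· + 1)) = (c - p) + 1 + wgt c t
      rw [ih c]
      omega

lemma wgt_map_succ (cs : List ℕ) (h : cs ≠ []) :
    wgt 0 (cs.map (· + 1)) = wgt 0 cs + 1 := by
  cases cs with
  | nil => exact absurd rfl h
  | cons c t =>
      show (c + 1 - 0) + 1 + wgt (c+1) (t.map (· + 1)) = ((c - 0) + 1 + wgt c t) + 1
      rw [wgt_map_succ_aux t c]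
      omega

/- weight under duplicating the first entry -/
lemma wgt_dup (c : ℕ) (t : List ℕ) : wgt 0 (c :: c :: t) = wgt 0 (c :: t) + 1 := by
  show (c - 0) + 1 + ((c - c) + 1 + wgt c t) = ((c - 0) + 1 + wgt c t) + 1
  omega

lemma run_ge_two {cs : List ℕ} (h : 2 ≤ run cs) : ∃ c t, cs = c :: c :: t := by
  cases cs with
  | nil => simp [run] at h
  | cons c t =>
      cases t with
      | nil => simp [run, leadEq] at h
      | cons d t' =>
          refine ⟨c, t', ?_⟩
          have : d = c := by
            by_contra hne
            simp [run, leadEq, hne] at h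
          rw [this]

lemma run_dup (c : ℕ) (t : List ℕ) : run (c :: c :: t) = run (c :: t) + 1 := by
  simp [run, leadEq]

end LchLhs
namespace LchLhs
open List

def A (k n : ℕ) := {cs : List ℕ // okcs cs ∧ wgt 0 cs = n ∧ ∀ c ∈ cs, k ≤ c}
def B (k n : ℕ) := {cs : List ℕ // okcs cs ∧ wgt 0 cs = n ∧ k ≤ run cs}

instance (k n : ℕ) : Finite (A k n) := finite_sub _ n
instance (k n : ℕ) : Finite (B k n) := finite_sub _ n

lemma succ_pred_map {cs : List ℕ} (h : ∀ c ∈ cs, 1 ≤ c) :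
    (cs.map (· - 1)).map (· + 1) = cs := by
  rw [List.map_map]
  conv_rhs => rw [← List.map_id cs]
  apply List.map_congr_left
  intro c hc
  have := h c hc
  simp; omega

lemma pred_succ_map (cs : List ℕ) : (cs.map (· + 1)).map (· - 1) = cs := by
  rw [List.map_map]
  conv_rhs => rw [← List.map_id cs]
  apply List.map_congr_left
  intro c _
  simp

lemma lemA (k n : ℕ) (hk : 1 ≤ k) : Nat.card (A (k+1) (n+1)) = Nat.card (A k n) := by
  apply Nat.card_congr
  refine Equiv.mk
    (fun x => ⟨x.1.map (· - 1), ?_, ?_, ?_⟩)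
    (fun x => ⟨x.1.map (· + 1), ?_, ?_, ?_⟩)
    (fun x => Subtype.ext ?_) (fun x => Subtype.ext ?_)
  · obtain ⟨⟨hne, h1⟩, hw, hk'⟩ := x.2
    refine ⟨by simpa using hne, ?_⟩
    intro c hc
    obtain ⟨d, hd, rfl⟩ := List.mem_map.1 hc
    have := hk' d hd
    omega
  · obtain ⟨⟨hne, h1⟩, hw, hk'⟩ := x.2
    have h2 : ∀ c ∈ x.1, 1 ≤ c := fun c hc => le_trans (by omega) (hk' c hc)
    have h3 := wgt_map_succ (x.1.map (· - 1)) (by simpa using hne)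
    rw [succ_pred_map h2] at h3
    omega
  · obtain ⟨⟨hne, h1⟩, hw, hk'⟩ := x.2
    intro c hc
    obtain ⟨d, hd, rfl⟩ := List.mem_map.1 hc
    have := hk' d hd
    omega
  · obtain ⟨⟨hne, h1⟩, hw, hk'⟩ := x.2
    refine ⟨by simpa using hne, ?_⟩
    intro c hc
    obtain ⟨d, hd, rfl⟩ := List.mem_map.1 hc
    omega
  · obtain ⟨⟨hne, h1⟩, hw, hk'⟩ := x.2
    rw [wgt_map_succ x.1 hne, hw]
  · obtain ⟨⟨hne, h1⟩, hw, hk'⟩ := x.2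
    intro c hc
    obtain ⟨d, hd, rfl⟩ := List.mem_map.1 hc
    have := hk' d hd
    omega
  · obtain ⟨⟨hne, h1⟩, hw, hk'⟩ := x.2
    exact succ_pred_map (fun c hc => le_trans (by omega) (hk' c hc))
  · exact pred_succ_map x.1

def dup : List ℕ → List ℕ
  | [] => []
  | c :: t => c :: c :: t

lemma lemB (k n : ℕ) (hk : 1 ≤ k) : Nat.card (B (k+1) (n+1)) = Nat.card (B k n) := by
  apply Nat.card_congr
  refine Equiv.mk
    (fun x => ⟨x.1.tail, ?_⟩)
    (fun x => ⟨dup x.1, ?_⟩)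
    (fun x => Subtype.ext ?_) (fun x => Subtype.ext ?_)
  · obtain ⟨⟨hne, h1⟩, hw, hr⟩ := x.2
    obtain ⟨c, t, hct⟩ := run_ge_two (le_trans (by omega) hr)
    rw [hct]
    show okcs (c :: t) ∧ wgt 0 (c :: t) = n ∧ k ≤ run (c :: t)
    rw [hct, wgt_dup] at hw
    rw [hct, run_dup] at hr
    rw [hct] at h1
    refine ⟨⟨by simp, fun d hd => h1 d (List.mem_cons_of_mem c hd)⟩, by omega, by omega⟩
  · obtain ⟨⟨hne, h1⟩, hw, hr⟩ := x.2
    obtain ⟨c, t, hct⟩ : ∃ c t, (x.1 : List ℕ) = c :: t := by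
      cases hx : (x.1 : List ℕ) with
      | nil => exact absurd hx hne
      | cons c t => exact ⟨c, t, rfl⟩
    rw [hct]
    rw [hct] at h1 hw hr
    show okcs (c :: c :: t) ∧ wgt 0 (c :: c :: t) = n + 1 ∧ k + 1 ≤ run (c :: c :: t)
    refine ⟨⟨by simp, ?_⟩, ?_, ?_⟩
    · intro d hd
      rcases List.mem_cons.1 hd with rfl | hd'
      · exact h1 d (List.mem_cons_self)
      · exact h1 d hd'
    · rw [wgt_dup, hw]
    · rw [run_dup]; omega
  · obtain ⟨⟨hne, h1⟩, hw, hr⟩ := x.2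
    obtain ⟨c, t, hct⟩ := run_ge_two (le_trans (by omega) hr)
    show dup ((x.1 : List ℕ).tail) = (x.1 : List ℕ)
    rw [hct]
    rfl
  · obtain ⟨⟨hne, h1⟩, hw, hr⟩ := x.2
    obtain ⟨c, t, hct⟩ : ∃ c t, (x.1 : List ℕ) = c :: t := by
      cases hx : (x.1 : List ℕ) with
      | nil => exact absurd hx hne
      | cons c t => exact ⟨c, t, rfl⟩
    show (dup (x.1 : List ℕ)).tail = (x.1 : List ℕ)
    rw [hct]
    rfl

lemma run_pos {cs : List ℕ} (h : cs ≠ []) : 1 ≤ run cs := by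
  cases cs with
  | nil => exact absurd rfl h
  | cons c t => show 1 ≤ leadEq c t + 1; omega

lemma AB_base (n : ℕ) : Nat.card (A 1 n) = Nat.card (B 1 n) := by
  apply Nat.card_congr
  apply Equiv.subtypeEquivRight
  intro cs
  constructor
  · rintro ⟨h1, h2, _⟩
    exact ⟨h1, h2, run_pos h1.1⟩
  · rintro ⟨h1, h2, _⟩
    exact ⟨h1, h2, h1.2⟩

lemma empty_zero (P : List ℕ → Prop) : Nat.card {cs : List ℕ // okcs cs ∧ wgt 0 cs = 0 ∧ P cs} = 0 := by
  have : IsEmpty {cs : List ℕ // okcs cs ∧ wgt 0 cs = 0 ∧ P cs} := by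
    refine ⟨fun x => ?_⟩
    have := one_le_wgt x.2.1.1 0
    have h2 := x.2.2.1
    omega
  exact Nat.card_of_isEmpty

lemma mainAB (k : ℕ) (hk : 1 ≤ k) : ∀ n, Nat.card (A k n) = Nat.card (B k n) := by
  induction k, hk using Nat.le_induction with
  | base => exact AB_base
  | succ k hk ih =>
      intro n
      cases n with
      | zero => rw [show (0:ℕ) = 0 from rfl]; exact (empty_zero _).trans (empty_zero _).symm
      | succ m => rw [lemA k m hk, lemB k m hk, ih m]

end LchLhs
namespace LchLhs
open List

def Amin (h n : ℕ) := {cs : List ℕ // okcs cs ∧ wgt 0 cs = n ∧ (h ∈ cs ∧ ∀ c ∈ cs, h ≤ c)}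
def Brun (h n : ℕ) := {cs : List ℕ // okcs cs ∧ wgt 0 cs = n ∧ run cs = h}

instance (h n : ℕ) : Finite (Amin h n) := finite_sub _ n
instance (h n : ℕ) : Finite (Brun h n) := finite_sub _ n

open Classical in
lemma split_min (h n : ℕ) :
    Nat.card (Amin h n) + Nat.card (A (h+1) n) = Nat.card (A h n) := by
  have e := Equiv.sumCompl (fun x : A h n => h ∈ Subtype.val x)
  rw [← Nat.card_congr e, Nat.card_sum]
  congr 1
  · exact Nat.card_congr ((Equiv.subtypeSubtypeEquivSubtypeInter
      (fun cs : List ℕ => okcs cs ∧ wgt 0 cs = n ∧ ∀ c ∈ cs, h ≤ c)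
      (fun cs => h ∈ cs)).trans
      (Equiv.subtypeEquivRight (fun cs => by
        constructor
        · rintro ⟨⟨h1, h2, h3⟩, h4⟩; exact ⟨h1, h2, h4, h3⟩
        · rintro ⟨h1, h2, h3, h4⟩; exact ⟨⟨h1, h2, h4⟩, h3⟩))).symm
  · exact Nat.card_congr ((Equiv.subtypeSubtypeEquivSubtypeInter
      (fun cs : List ℕ => okcs cs ∧ wgt 0 cs = n ∧ ∀ c ∈ cs, h ≤ c)
      (fun cs => h ∉ cs)).trans
      (Equiv.subtypeEquivRight (fun cs => by
        constructor
        · rintro ⟨⟨h1, h2, h3⟩, h4⟩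
          refine ⟨h1, h2, ?_⟩
          intro c hc
          have h5 := h3 c hc
          have hne : c ≠ h := fun he => h4 (he ▸ hc)
          omega
        · rintro ⟨h1, h2, h3⟩
          exact ⟨⟨h1, h2, fun c hc => le_trans (by omega) (h3 c hc)⟩,
            fun hm => by have := h3 h hm; omega⟩))).symm

open Classical in
lemma split_run (h n : ℕ) :
    Nat.card (Brun h n) + Nat.card (B (h+1) n) = Nat.card (B h n) := by
  have e := Equiv.sumCompl (fun x : B h n => run (Subtype.val x) = h)
  rw [← Nat.card_congr e, Nat.card_sum]
  congr 1
  · exact Nat.card_congr ((Equiv.subtypeSubtypeEquivSubtypeInter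
      (fun cs : List ℕ => okcs cs ∧ wgt 0 cs = n ∧ h ≤ run cs)
      (fun cs => run cs = h)).trans
      (Equiv.subtypeEquivRight (fun cs => by
        constructor
        · rintro ⟨⟨h1, h2, h3⟩, h4⟩; exact ⟨h1, h2, h4⟩
        · rintro ⟨h1, h2, h3⟩; exact ⟨⟨h1, h2, le_of_eq h3.symm⟩, h3⟩))).symm
  · exact Nat.card_congr ((Equiv.subtypeSubtypeEquivSubtypeInter
      (fun cs : List ℕ => okcs cs ∧ wgt 0 cs = n ∧ h ≤ run cs)
      (fun cs => ¬ run cs = h)).trans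
      (Equiv.subtypeEquivRight (fun cs => by
        constructor
        · rintro ⟨⟨h1, h2, h3⟩, h4⟩
          exact ⟨h1, h2, by omega⟩
        · rintro ⟨h1, h2, h3⟩
          exact ⟨⟨h1, h2, by omega⟩, by omega⟩))).symm

lemma comp_main (h n : ℕ) (h1 : 1 ≤ h) :
    Nat.card (Amin h n) = Nat.card (Brun h n) := by
  have s1 := split_min h n
  have s2 := split_run h n
  have m1 := mainAB h h1 n
  have m2 := mainAB (h+1) (by omega) n
  omega

lemma word_min_card (n h : ℕ) (h1 : 1 ≤ h) :
    Nat.card {w : List Step // IsBargraph w ∧ semi w = n ∧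
        (h : ℤ) ∈ colHeights 0 w ∧ ∀ c ∈ colHeights 0 w, (h : ℤ) ≤ c}
      = Nat.card (Amin h n) := by
  apply Nat.card_congr
  symm
  apply Equiv.ofBijective (f := fun x : Amin h n => (⟨enc 0 x.1, isBargraph_enc _ x.2.1,
    by rw [semi_enc]; exact x.2.2.1, by
      have hch := colHeights_enc 0 x.1
      rw [Nat.cast_zero] at hch
      rw [hch]
      refine ⟨List.mem_map.2 ⟨h, x.2.2.2.1, rfl⟩, ?_⟩
      intro c hc
      obtain ⟨d, hd, rfl⟩ := List.mem_map.1 hc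
      exact_mod_cast x.2.2.2.2 d hd⟩ : {w : List Step // IsBargraph w ∧ semi w = n ∧
        (h : ℤ) ∈ colHeights 0 w ∧ ∀ c ∈ colHeights 0 w, (h : ℤ) ≤ c}))
  constructor
  · intro a b hab
    exact Subtype.ext (enc0_inj (congrArg Subtype.val hab))
  · rintro ⟨w, hb, hs, hm, hbd⟩
    obtain ⟨cs, hok, rfl⟩ := dec0 w hb
    have hch := colHeights_enc 0 cs
    rw [Nat.cast_zero] at hch
    rw [hch] at hm hbd
    refine ⟨⟨cs, hok, ?_, ?_, ?_⟩, ?_⟩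
    · rw [semi_enc] at hs; exact hs
    · obtain ⟨d, hd, hde⟩ := List.mem_map.1 hm
      have : d = h := by exact_mod_cast hde
      exact this ▸ hd
    · intro c hc
      have := hbd (c : ℤ) (List.mem_map.2 ⟨c, hc, rfl⟩)
      exact_mod_cast this
    · rfl

lemma word_run_card (n h : ℕ) :
    Nat.card {w : List Step // IsBargraph w ∧ semi w = n ∧ lhsW w = h}
      = Nat.card (Brun h n) := by
  apply Nat.card_congr
  symm
  apply Equiv.ofBijective (f := fun x : Brun h n => (⟨enc 0 x.1, isBargraph_enc _ x.2.1,
    by rw [semi_enc]; exact x.2.2.1,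
    by rw [lhsW_enc _ x.2.1.2]; exact x.2.2.2⟩ :
      {w : List Step // IsBargraph w ∧ semi w = n ∧ lhsW w = h}))
  constructor
  · intro a b hab
    exact Subtype.ext (enc0_inj (congrArg Subtype.val hab))
  · rintro ⟨w, hb, hs, hl⟩
    obtain ⟨cs, hok, rfl⟩ := dec0 w hb
    refine ⟨⟨cs, hok, ?_, ?_⟩, ?_⟩
    · rw [semi_enc] at hs; exact hs
    · rw [lhsW_enc _ hok.2] at hl; exact hl
    · rfl

lemma word_min_empty (n : ℕ) :
    Nat.card {w : List Step // IsBargraph w ∧ semi w = n ∧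
        ((0:ℕ) : ℤ) ∈ colHeights 0 w ∧ ∀ c ∈ colHeights 0 w, ((0:ℕ) : ℤ) ≤ c} = 0 := by
  have : IsEmpty {w : List Step // IsBargraph w ∧ semi w = n ∧
      ((0:ℕ) : ℤ) ∈ colHeights 0 w ∧ ∀ c ∈ colHeights 0 w, ((0:ℕ) : ℤ) ≤ c} := by
    refine ⟨fun x => ?_⟩
    obtain ⟨w, hb, _, hm, _⟩ := x
    obtain ⟨cs, hok, rfl⟩ := dec0 w hb
    have hch := colHeights_enc 0 cs
    rw [Nat.cast_zero] at hch
    rw [hch] at hm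
    obtain ⟨d, hd, hde⟩ := List.mem_map.1 hm
    have : d = 0 := by exact_mod_cast hde
    have := hok.2 d hd
    omega
  exact Nat.card_of_isEmpty

lemma word_run_empty (n : ℕ) :
    Nat.card {w : List Step // IsBargraph w ∧ semi w = n ∧ lhsW w = 0} = 0 := by
  have : IsEmpty {w : List Step // IsBargraph w ∧ semi w = n ∧ lhsW w = 0} := by
    refine ⟨fun x => ?_⟩
    obtain ⟨w, hb, _, hl⟩ := x
    obtain ⟨cs, hok, rfl⟩ := dec0 w hb
    rw [lhsW_enc _ hok.2] at hl
    have := run_pos hok.1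
    omega
  exact Nat.card_of_isEmpty

end LchLhs

/-- least column height and width of the leftmost horizontal segment are
equidistributed on bargraphs of semiperimeter `n`. -/
theorem lch_lhs_equidistributed :
    ∀ n h : ℕ, 2 ≤ n →
      Nat.card {w : List Step // IsBargraph w ∧ semi w = n ∧
          (h : ℤ) ∈ colHeights 0 w ∧ ∀ c ∈ colHeights 0 w, (h : ℤ) ≤ c}
        = Nat.card {w : List Step // IsBargraph w ∧ semi w = n ∧ lhsW w = h} := by
  intro n h _
  cases h with
  | zero => rw [LchLhs.word_min_empty n, LchLhs.word_run_empty n]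
  | succ m =>
      rw [LchLhs.word_min_card n (m+1) (by omega), LchLhs.word_run_card n (m+1),
        LchLhs.comp_main (m+1) n (by omega)]
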